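/- With η_α(k) = w_k/k! for k ≥ 2, one has the power-law tail asymptotic: k^{1+α}·η_α(k) → (α−1)/Γ(2−α) as k → ∞. -/

import Mathlib

noncomputable def marchalW (α : ℝ) : ℕ → ℝ
  | 0 => 1
  | 1 => 0
  | k => (α - 1) * ∏ j ∈ Finset.Ico 2 k, ((j : ℝ) - α)

noncomputable def eta (α : ℝ) (k : ℕ) : ℝ :=
  if k = 0 then 1 / α
  else if k = 1 then 0
  else marchalW α k / (Nat.factorial k : ℝ)

lemma eta_key (α : ℝ) (hα₁ : 1 < α) (hα₂ : α < 2) (k : ℕ) (hk : 4 ≤ k) :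
    (k : ℝ) ^ ((1 : ℝ) + α) * eta α k =
      (α - 1) * ((1 - 3 / (k : ℝ)) ^ ((2:ℝ) - α) /
        ((1 - 1 / (k : ℝ)) * (1 - 2 / (k : ℝ)))) / Real.GammaSeq (2 - α) (k - 3) := by
  obtain ⟨m, rfl⟩ : ∃ m, k = m + 4 := ⟨k - 4, by omega⟩
  have hm3 : m + 4 - 3 = m + 1 := by omega
  rw [hm3]
  have hprod : ∏ j ∈ Finset.Ico 2 (m + 4), ((j : ℝ) - α)
      = ∏ j ∈ Finset.range (m + 2), ((2 - α) + j) := by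
    rw [Finset.prod_Ico_eq_prod_range]
    refine Finset.prod_congr rfl fun i _ => ?_
    push_cast; ring
  have hs : (0:ℝ) < 2 - α := by linarith
  have hPpos : (0:ℝ) < ∏ j ∈ Finset.range (m + 2), ((2 - α) + j) :=
    Finset.prod_pos fun j _ => by positivity
  have hGdef : Real.GammaSeq (2 - α) (m + 1)
      = ((m + 1 : ℕ) : ℝ) ^ ((2:ℝ) - α) * ((m + 1).factorial : ℝ)
        / ∏ j ∈ Finset.range (m + 2), ((2 - α) + j) := rfl
  have hGpos : 0 < Real.GammaSeq (2 - α) (m + 1) := by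
    rw [hGdef]
    have : (0:ℝ) < ((m + 1 : ℕ) : ℝ) ^ ((2:ℝ) - α) := by positivity
    positivity
  have heta : eta α (m + 4) = marchalW α (m + 4) / ((m + 4).factorial : ℝ) := rfl
  have hw : marchalW α (m + 4) = (α - 1) * ∏ j ∈ Finset.Ico 2 (m + 4), ((j : ℝ) - α) := rfl
  have hP : (∏ j ∈ Finset.range (m + 2), ((2 - α) + j))
      = ((m + 1 : ℕ) : ℝ) ^ ((2:ℝ) - α) * ((m + 1).factorial : ℝ)
        / Real.GammaSeq (2 - α) (m + 1) := by
    rw [hGdef]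
    field_simp
  have hfac : ((m + 4).factorial : ℝ)
      = ((m:ℝ) + 4) * ((m:ℝ) + 3) * ((m:ℝ) + 2) * ((m + 1).factorial : ℝ) := by
    show ((m + 3 + 1).factorial : ℝ) = _
    rw [Nat.factorial_succ, Nat.factorial_succ, Nat.factorial_succ]
    push_cast; ring
  have hk4 : (0:ℝ) < (m:ℝ) + 4 := by positivity
  have h31 : 1 - 3 / ((m:ℝ) + 4) = ((m:ℝ) + 1) / ((m:ℝ) + 4) := by field_simp; ring
  have h11 : 1 - 1 / ((m:ℝ) + 4) = ((m:ℝ) + 3) / ((m:ℝ) + 4) := by field_simp; ring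
  have h21 : 1 - 2 / ((m:ℝ) + 4) = ((m:ℝ) + 2) / ((m:ℝ) + 4) := by field_simp; ring
  have hcast : (((m + 4 : ℕ)) : ℝ) = (m:ℝ) + 4 := by push_cast; ring
  have hcast1 : (((m + 1 : ℕ)) : ℝ) = (m:ℝ) + 1 := by push_cast; ring
  rw [heta, hw, hprod, hP, hfac, hcast, hcast1, h31, h11, h21,
    Real.div_rpow (by positivity) hk4.le]
  set a : ℝ := ((m:ℝ) + 1) ^ ((2:ℝ) - α) with ha
  set b : ℝ := ((m:ℝ) + 4) ^ ((1:ℝ) + α) with hb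
  set c : ℝ := ((m:ℝ) + 4) ^ ((2:ℝ) - α) with hc
  have hbc : b * c = ((m:ℝ) + 4) ^ (3:ℕ) := by
    rw [hb, hc, ← Real.rpow_add hk4, ← Real.rpow_natCast ((m:ℝ) + 4) 3]
    norm_num
  clear_value a b c
  have hcpos : 0 < c := hc ▸ Real.rpow_pos_of_pos hk4 _
  have hfpos : (0:ℝ) < ((m + 1).factorial : ℝ) := by positivity
  have hac : a / c = a * b / (((m:ℝ) + 4) ^ (3:ℕ)) := by
    rw [div_eq_div_iff hcpos.ne' (by positivity)]
    linear_combination (-a) * hbc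
  rw [hac]
  field_simp

/-- Power-law tail of `η_α`: `k^{1+α} · η_α(k) → (α-1)/Γ(2-α)` as `k → ∞`. -/
theorem eta_tail_asymptotic (α : ℝ) (hα₁ : 1 < α) (hα₂ : α < 2) :
    Filter.Tendsto (fun k : ℕ => (k : ℝ) ^ ((1 : ℝ) + α) * eta α k)
      Filter.atTop (nhds ((α - 1) / Real.Gamma (2 - α))) := by
  have hs : (0:ℝ) < 2 - α := by linarith
  have hΓ : 0 < Real.Gamma (2 - α) := Real.Gamma_pos_of_pos hs
  have hz : ∀ c : ℝ, Filter.Tendsto (fun k : ℕ => c / (k : ℝ)) Filter.atTop (nhds 0) :=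
    fun c => tendsto_const_nhds.div_atTop tendsto_natCast_atTop_atTop
  have h1 : ∀ c : ℝ, Filter.Tendsto (fun k : ℕ => 1 - c / (k : ℝ)) Filter.atTop (nhds 1) := by
    intro c
    simpa using tendsto_const_nhds.sub (hz c)
  have hnum : Filter.Tendsto (fun k : ℕ => (1 - 3 / (k : ℝ)) ^ ((2:ℝ) - α))
      Filter.atTop (nhds 1) := by
    simpa using (h1 3).rpow_const (Or.inl one_ne_zero)
  have hden : Filter.Tendsto (fun k : ℕ => (1 - 1 / (k : ℝ)) * (1 - 2 / (k : ℝ)))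
      Filter.atTop (nhds 1) := by
    simpa using (h1 1).mul (h1 2)
  have hG : Filter.Tendsto (fun k : ℕ => Real.GammaSeq (2 - α) (k - 3))
      Filter.atTop (nhds (Real.Gamma (2 - α))) :=
    (Real.GammaSeq_tendsto_Gamma (2 - α)).comp (Filter.tendsto_sub_atTop_nat 3)
  have hmain : Filter.Tendsto (fun k : ℕ => (α - 1) *
      ((1 - 3 / (k : ℝ)) ^ ((2:ℝ) - α) / ((1 - 1 / (k : ℝ)) * (1 - 2 / (k : ℝ))))
      / Real.GammaSeq (2 - α) (k - 3)) Filter.atTop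
      (nhds ((α - 1) / Real.Gamma (2 - α))) := by
    have := ((tendsto_const_nhds (x := α - 1)).mul (hnum.div hden one_ne_zero)).div hG hΓ.ne'
    rw [div_one, mul_one] at this
    exact this
  refine hmain.congr' ?_
  filter_upwards [Filter.eventually_atTop.2 ⟨4, fun k hk => hk⟩] with k hk
  exact (eta_key α hα₁ hα₂ k hk).symm
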